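/- Let G be a group and let A = [G,G] ∩ Z(G) be the intersection of the derived (commutator) subgroup of G with the center of G. Suppose S ⊆ G \ A and B ⊆ A are subsets such that S ∪ B generates G. Then S generates G. -/

import Mathlib

open scoped commutatorElement

private lemma central_commutator_left {G : Type*} [Group G] (h z b : G)
    (hz : ∀ g : G, g * z = z * g) : ⁅h * z, b⁆ = ⁅h, b⁆ := by
  have key : z * b * z⁻¹ = b := by rw [← hz b, mul_assoc, mul_inv_cancel, mul_one]
  calc ⁅h * z, b⁆ = h * (z * b * z⁻¹) * h⁻¹ * b⁻¹ := by
        simp only [commutatorElement_def, mul_inv_rev]; group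
    _ = ⁅h, b⁆ := by rw [key, commutatorElement_def]

private lemma central_commutator_right {G : Type*} [Group G] (a h z : G)
    (hz : ∀ g : G, g * z = z * g) : ⁅a, h * z⁆ = ⁅a, h⁆ := by
  rw [← commutatorElement_inv, central_commutator_left h z a hz, commutatorElement_inv]

/-- Central commutators are non-generators: let
`A = [G,G] ⊓ Z(G)`.  If `S ⊆ G \ A` and `B ⊆ A` are such that `S ∪ B`
generates `G`, then `S` already generates `G`. -/
theorem closure_eq_top_of_union_central_commutators
    {G : Type*} [Group G] (S B : Set G)
    (hS : S ⊆ (↑(commutator G ⊓ Subgroup.center G) : Set G)ᶜ)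
    (hB : B ⊆ (↑(commutator G ⊓ Subgroup.center G) : Set G))
    (hgen : Subgroup.closure (S ∪ B) = ⊤) :
    Subgroup.closure S = ⊤ := by
  set H := Subgroup.closure S with hH
  have hfac : ∀ g : G, ∃ h ∈ H, ∃ z ∈ Subgroup.center G, g = h * z := by
    intro g
    have hg : g ∈ Subgroup.closure (S ∪ B) := by rw [hgen]; trivial
    induction hg using Subgroup.closure_induction with
    | mem x hx =>
      rcases hx with hx | hx
      · exact ⟨x, Subgroup.subset_closure hx, 1, (Subgroup.center G).one_mem, (mul_one x).symm⟩
      · exact ⟨1, H.one_mem, x, (hB hx).2, (one_mul x).symm⟩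
    | one => exact ⟨1, H.one_mem, 1, (Subgroup.center G).one_mem, (one_mul 1).symm⟩
    | mul a b _ _ ha hb =>
      obtain ⟨h₁, hh₁, z₁, hz₁, rfl⟩ := ha
      obtain ⟨h₂, hh₂, z₂, hz₂, rfl⟩ := hb
      refine ⟨h₁ * h₂, H.mul_mem hh₁ hh₂, z₁ * z₂,
        (Subgroup.center G).mul_mem hz₁ hz₂, ?_⟩
      have := (Subgroup.mem_center_iff.mp hz₁) h₂
      rw [mul_assoc, mul_assoc, ← mul_assoc z₁, ← this, mul_assoc]
    | inv a _ ha =>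
      obtain ⟨h₁, hh₁, z₁, hz₁, rfl⟩ := ha
      refine ⟨h₁⁻¹, H.inv_mem hh₁, z₁⁻¹, (Subgroup.center G).inv_mem hz₁, ?_⟩
      rw [mul_inv_rev, (Subgroup.mem_center_iff.mp ((Subgroup.center G).inv_mem hz₁)) h₁⁻¹]
  have hcomm : commutator G ≤ H := by
    rw [commutator_def, Subgroup.commutator_le]
    intro a _ b _
    obtain ⟨h₁, hh₁, z₁, hz₁, rfl⟩ := hfac a
    obtain ⟨h₂, hh₂, z₂, hz₂, rfl⟩ := hfac b
    rw [central_commutator_left h₁ z₁ _ (Subgroup.mem_center_iff.mp hz₁),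
      central_commutator_right h₁ h₂ z₂ (Subgroup.mem_center_iff.mp hz₂),
      commutatorElement_def]
    exact H.mul_mem (H.mul_mem (H.mul_mem hh₁ hh₂) (H.inv_mem hh₁)) (H.inv_mem hh₂)
  have hBH : B ⊆ (H : Set G) := fun b hb => hcomm (hB hb).1
  have : Subgroup.closure (S ∪ B) ≤ H :=
    (Subgroup.closure_le H).mpr (Set.union_subset Subgroup.subset_closure hBH)
  exact top_le_iff.mp (hgen ▸ this)
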